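/- arXiv:2012.09969 — 4 statements merged into one kernel-verified Lean document; each statement's English description precedes it below -/
import Mathlib

section
/- For all N ≥ 1, Z_{2N,1} · Z_{N,4} = 2^{2N} · Z_{2N,2}, where Z_{N,β} = (2N)^{-βN(N-1)/4 - N/2} (N!)^{-1} β^{-N/2 - βN(N-1)/4} (2π)^{N/2} ∏_{j=1}^N Γ(1+jβ/2)/Γ(1+β/2). -/
open Real Finset

noncomputable def Znorm (N : ℕ) (β : ℝ) : ℝ :=
  ((2 * N : ℝ)) ^ (-(β * N * (N - 1) / 4) - N / 2 : ℝ) * ((N.factorial : ℝ))⁻¹ *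
    β ^ (-(N : ℝ) / 2 - β * N * (N - 1) / 4 : ℝ) * (2 * π) ^ ((N : ℝ) / 2) *
    ∏ j ∈ Finset.Icc 1 N, Real.Gamma (1 + j * β / 2) / Real.Gamma (1 + β / 2)

lemma prodA (N : ℕ) :
    ∏ j ∈ Finset.Icc 1 (2 * N), Real.Gamma (1 + j * 1 / 2) =
      Real.sqrt π ^ N * (∏ k ∈ Finset.Icc 1 N, ((2 * k).factorial : ℝ)) *
        (2 : ℝ) ^ (-((N : ℝ) * ((N : ℝ) + 1))) := by
  induction N with
  | zero => simp
  | succ n ih =>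
    rw [Finset.prod_Icc_succ_top (by omega : 1 ≤ n + 1) (fun k => ((2 * k).factorial : ℝ))]
    rw [show 2 * (n + 1) = (2 * n + 1) + 1 by ring]
    rw [Finset.prod_Icc_succ_top (by omega), Finset.prod_Icc_succ_top (by omega), ih]
    have hdup := Real.Gamma_mul_Gamma_add_half ((n : ℝ) + 3 / 2)
    have e1 : (1 : ℝ) + (↑(2 * n + 1) : ℝ) * 1 / 2 = (n : ℝ) + 3 / 2 := by push_cast; ring
    have e2 : (1 : ℝ) + (↑(2 * n + 1 + 1) : ℝ) * 1 / 2 = ((n : ℝ) + 3 / 2) + 1 / 2 := by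
      push_cast; ring
    have e3 : (2 : ℝ) * ((n : ℝ) + 3 / 2) = ((2 * n + 1 + 1 : ℕ) : ℝ) + 1 := by push_cast; ring
    rw [mul_assoc, e1, e2, hdup, e3, Real.Gamma_nat_eq_factorial]
    have hpow : (2 : ℝ) ^ (-((n : ℝ) * ((n : ℝ) + 1))) *
        (2 : ℝ) ^ ((1 : ℝ) - (((2 * n + 1 + 1 : ℕ) : ℝ) + 1)) =
        (2 : ℝ) ^ (-((((n + 1 : ℕ)) : ℝ) * ((((n + 1 : ℕ)) : ℝ) + 1))) := by
      rw [← Real.rpow_add (by norm_num : (0:ℝ) < 2)]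
      congr 1
      push_cast; ring
    linear_combination (Real.sqrt π ^ n * (∏ k ∈ Finset.Icc 1 n, ((2 * k).factorial : ℝ)) *
      ((2 * n + 1 + 1).factorial : ℝ) * Real.sqrt π) * hpow

lemma prodB (N : ℕ) :
    (∏ j ∈ Finset.Icc 1 (2 * N), (j.factorial : ℝ)) * (2 ^ N * (N.factorial : ℝ)) =
      (∏ k ∈ Finset.Icc 1 N, ((2 * k).factorial : ℝ)) ^ 2 := by
  induction N with
  | zero => simp
  | succ n ih =>
    rw [Finset.prod_Icc_succ_top (by omega : 1 ≤ n + 1) (fun k => ((2 * k).factorial : ℝ))]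
    rw [show 2 * (n + 1) = (2 * n + 1) + 1 by ring]
    rw [Finset.prod_Icc_succ_top (by omega), Finset.prod_Icc_succ_top (by omega)]
    rw [Nat.factorial_succ (2 * n + 1), Nat.factorial_succ n, pow_succ]
    push_cast
    linear_combination ((((2 * n + 1).factorial : ℝ)) ^ 2 * (2 * (n : ℝ) + 2) ^ 2) * ih

theorem stmt0 (N : ℕ) (hN : 1 ≤ N) :
    Znorm (2 * N) 1 * Znorm N 4 = 2 ^ (2 * N) * Znorm (2 * N) 2 := by
  have hn : (0 : ℝ) < (N : ℝ) := by exact_mod_cast hN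
  have hg2 : Real.Gamma (1 + 2 / 2) = 1 := by
    rw [show (1 : ℝ) + 2 / 2 = 2 by norm_num, Real.Gamma_two]
  have hg3 : Real.Gamma (1 + 4 / 2) = 2 := by
    rw [show (1 : ℝ) + 4 / 2 = 2 + 1 by norm_num, Real.Gamma_add_one (by norm_num),
      Real.Gamma_two]
    norm_num
  have hg32 : Real.Gamma (1 + 1 / 2) = Real.sqrt π / 2 := by
    rw [show (1 : ℝ) + 1 / 2 = 1 / 2 + 1 by ring, Real.Gamma_add_one (by norm_num),
      Real.Gamma_one_half_eq]
    ring
  have hP : (0 : ℝ) < ∏ k ∈ Finset.Icc 1 N, ((2 * k).factorial : ℝ) :=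
    Finset.prod_pos fun k _ => by exact_mod_cast (2 * k).factorial_pos
  have hQ : (0 : ℝ) < ∏ j ∈ Finset.Icc 1 (2 * N), ((j).factorial : ℝ) :=
    Finset.prod_pos fun k _ => by exact_mod_cast k.factorial_pos
  have hF : (0 : ℝ) < (N.factorial : ℝ) := by exact_mod_cast N.factorial_pos
  have hG : (0 : ℝ) < ((2 * N).factorial : ℝ) := by exact_mod_cast (2 * N).factorial_pos
  -- rewrite the three Gamma products
  have h2 : ∏ j ∈ Finset.Icc 1 (2 * N), Real.Gamma (1 + j * 2 / 2) / Real.Gamma (1 + 2 / 2) =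
      ∏ j ∈ Finset.Icc 1 (2 * N), ((j).factorial : ℝ) := by
    refine Finset.prod_congr rfl fun j _ => ?_
    rw [hg2, div_one, show (1 : ℝ) + j * 2 / 2 = (j : ℝ) + 1 by ring,
      Real.Gamma_nat_eq_factorial]
  have h4 : ∏ j ∈ Finset.Icc 1 N, Real.Gamma (1 + j * 4 / 2) / Real.Gamma (1 + 4 / 2) =
      (∏ k ∈ Finset.Icc 1 N, ((2 * k).factorial : ℝ)) * ((2 : ℝ)⁻¹) ^ N := by
    calc ∏ j ∈ Finset.Icc 1 N, Real.Gamma (1 + j * 4 / 2) / Real.Gamma (1 + 4 / 2)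
        = ∏ j ∈ Finset.Icc 1 N, (((2 * j).factorial : ℝ) * (2 : ℝ)⁻¹) := by
          refine Finset.prod_congr rfl fun j _ => ?_
          rw [hg3, show (1 : ℝ) + j * 4 / 2 = ((2 * j : ℕ) : ℝ) + 1 by push_cast; ring,
            Real.Gamma_nat_eq_factorial, div_eq_mul_inv]
      _ = (∏ k ∈ Finset.Icc 1 N, ((2 * k).factorial : ℝ)) * ((2 : ℝ)⁻¹) ^ N := by
          rw [Finset.prod_mul_distrib, Finset.prod_const, Nat.card_Icc]
          simp
  have h1 : ∏ j ∈ Finset.Icc 1 (2 * N), Real.Gamma (1 + j * 1 / 2) / Real.Gamma (1 + 1 / 2) =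
      (Real.sqrt π ^ N * (∏ k ∈ Finset.Icc 1 N, ((2 * k).factorial : ℝ)) *
        (2 : ℝ) ^ (-((N : ℝ) * ((N : ℝ) + 1)))) * ((Real.sqrt π / 2)⁻¹) ^ (2 * N) := by
    calc ∏ j ∈ Finset.Icc 1 (2 * N), Real.Gamma (1 + j * 1 / 2) / Real.Gamma (1 + 1 / 2)
        = ∏ j ∈ Finset.Icc 1 (2 * N),
            (Real.Gamma (1 + j * 1 / 2) * (Real.Gamma (1 + 1 / 2))⁻¹) := by
          exact Finset.prod_congr rfl fun j _ => (div_eq_mul_inv _ _)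
      _ = (∏ j ∈ Finset.Icc 1 (2 * N), Real.Gamma (1 + j * 1 / 2)) *
            ((Real.Gamma (1 + 1 / 2))⁻¹) ^ (2 * N) := by
          rw [Finset.prod_mul_distrib, Finset.prod_const, Nat.card_Icc]
          simp
      _ = _ := by rw [prodA, hg32]
  have hB := prodB N
  simp only [Znorm]
  rw [h1, h2, h4]
  simp only [Real.one_rpow, mul_one]
  push_cast
  -- take logs of hB
  have hBa : Real.log (∏ j ∈ Finset.Icc 1 (2 * N), ((j).factorial : ℝ)) +
      ((N : ℝ) * Real.log 2 + Real.log (N.factorial : ℝ)) =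
      2 * Real.log (∏ k ∈ Finset.Icc 1 N, ((2 * k).factorial : ℝ)) := by
    have hL := congrArg Real.log hB
    rw [Real.log_mul hQ.ne' (by positivity), Real.log_mul (by positivity) hF.ne',
      Real.log_pow, Real.log_pow] at hL
    push_cast at hL
    linarith [hL]
  set ν := Real.log (N : ℝ) with hν0
  set f := Real.log (N.factorial : ℝ) with hf0
  set g := Real.log ((2 * N).factorial : ℝ) with hg0
  set p := Real.log (∏ k ∈ Finset.Icc 1 N, ((2 * k).factorial : ℝ)) with hp0
  set q := Real.log (∏ j ∈ Finset.Icc 1 (2 * N), ((j).factorial : ℝ)) with hq0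
  have hνe : ((N : ℝ)) = Real.exp ν := (Real.exp_log hn).symm
  have hfe : ((N.factorial : ℝ)) = Real.exp f := (Real.exp_log hF).symm
  have hge : (((2 * N).factorial : ℝ)) = Real.exp g := (Real.exp_log hG).symm
  have hpe : (∏ k ∈ Finset.Icc 1 N, ((2 * k).factorial : ℝ)) = Real.exp p :=
    (Real.exp_log hP).symm
  have hqe : (∏ j ∈ Finset.Icc 1 (2 * N), ((j).factorial : ℝ)) = Real.exp q :=
    (Real.exp_log hQ).symm
  rw [hfe, hge, hpe, hqe, hνe]
  rw [hνe] at hBa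
  have h4log : Real.log 4 = 2 * Real.log 2 := by
    rw [show (4 : ℝ) = 2 ^ 2 by norm_num, Real.log_pow]
    push_cast; ring
  have key : ∀ a b : ℝ, 0 < a → 0 < b → Real.log a = Real.log b → a = b := by
    intro a b ha hb h
    rw [← Real.exp_log ha, ← Real.exp_log hb, h]
  apply key _ _ (by positivity) (by positivity)
  simp (disch := positivity) only [Real.log_mul, Real.log_rpow, Real.log_pow, Real.log_inv,
    Real.log_div, Real.log_sqrt, Real.log_exp, Real.log_one, h4log]
  push_cast
  rw [hνe]
  ring_nf
  ring_nf at hBa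
  linarith [hBa]
end

section
/- For all N ≥ 1, (∏_{j=1}^{2N} Γ(1+j/2) · ∏_{j=1}^{N} Γ(1+2j)) / ∏_{j=1}^{2N} Γ(1+j) = N! · π^{N/2} · 2^{-N²}. -/
open Real Finset

lemma key (N : ℕ) :
    ((∏ j ∈ Finset.Icc 1 (2 * N), Real.Gamma (1 + j / 2)) *
        ∏ j ∈ Finset.Icc 1 N, Real.Gamma (1 + 2 * j)) =
    ((N.factorial : ℝ) * Real.pi ^ ((N : ℝ) / 2) * 2 ^ (-(N : ℝ) ^ 2)) *
      (∏ j ∈ Finset.Icc 1 (2 * N), Real.Gamma (1 + j)) := by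
  induction N with
  | zero => simp
  | succ n ih =>
    have h2 : 2 * (n + 1) = (2 * n + 1) + 1 := by ring
    rw [h2, Finset.prod_Icc_succ_top (by omega), Finset.prod_Icc_succ_top (by omega),
      Finset.prod_Icc_succ_top (by omega), Finset.prod_Icc_succ_top (by omega),
      Finset.prod_Icc_succ_top (by omega)]
    have e1 : (1 : ℝ) + ((2 * n + 1 : ℕ) : ℝ) / 2 = ((n:ℝ)+1) + 1/2 := by push_cast; ring
    have e2 : (1 : ℝ) + ((2 * n + 1 + 1 : ℕ) : ℝ) / 2 = ((n+1:ℕ):ℝ) + 1 := by push_cast; ring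
    have e3 : (1 : ℝ) + 2 * ((n + 1 : ℕ) : ℝ) = ((2*n+2:ℕ):ℝ) + 1 := by push_cast; ring
    have e4 : (1 : ℝ) + ((2 * n + 1 : ℕ) : ℝ) = ((2*n+1:ℕ):ℝ) + 1 := by push_cast; ring
    have e5 : (1 : ℝ) + ((2 * n + 1 + 1 : ℕ) : ℝ) = ((2*n+2:ℕ):ℝ) + 1 := by push_cast; ring
    rw [e1, e2, e3, e4, e5, Real.Gamma_nat_eq_factorial, Real.Gamma_nat_eq_factorial,
      Real.Gamma_nat_eq_factorial]
    have dup := Real.Gamma_mul_Gamma_add_half ((n:ℝ)+1)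
    have hGn : Real.Gamma ((n:ℝ)+1) = (n.factorial : ℝ) := by
      exact_mod_cast Real.Gamma_nat_eq_factorial n
    have hG2 : Real.Gamma (2*((n:ℝ)+1)) = ((2*n+1:ℕ).factorial : ℝ) := by
      have : 2*((n:ℝ)+1) = ((2*n+1:ℕ):ℝ)+1 := by push_cast; ring
      rw [this, Real.Gamma_nat_eq_factorial]
    rw [hGn, hG2] at dup
    have hnf : (n.factorial : ℝ) ≠ 0 := by positivity
    have hpow2 : (2:ℝ) ^ (-(n:ℝ)^2) * 2 ^ (1-2*((n:ℝ)+1)) = 2 ^ (-((n:ℝ)+1)^2) := by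
      rw [← Real.rpow_add two_pos]; ring_nf
    have hpow : Real.pi ^ ((n:ℝ)/2) * Real.sqrt Real.pi = Real.pi ^ (((n:ℝ)+1)/2) := by
      rw [Real.sqrt_eq_rpow, ← Real.rpow_add Real.pi_pos]; ring_nf
    have hc : ((n+1:ℕ):ℝ) = (n:ℝ)+1 := by push_cast; ring
    rw [hc, ← hpow, ← hpow2]
    linear_combination (((n+1:ℕ).factorial:ℝ) * ((2*n+2:ℕ).factorial:ℝ)
        * Real.Gamma ((n:ℝ)+1+1/2)) * ih
      + (((n+1:ℕ).factorial:ℝ) * ((2*n+2:ℕ).factorial:ℝ)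
        * Real.pi ^ ((n:ℝ)/2) * 2 ^ (-(n:ℝ)^2)
        * (∏ j ∈ Finset.Icc 1 (2*n), Real.Gamma (1 + j))) * dup

theorem stmt1 (N : ℕ) (hN : 1 ≤ N) :
    ((∏ j ∈ Finset.Icc 1 (2 * N), Real.Gamma (1 + j / 2)) *
        ∏ j ∈ Finset.Icc 1 N, Real.Gamma (1 + 2 * j)) /
      (∏ j ∈ Finset.Icc 1 (2 * N), Real.Gamma (1 + j)) =
    (N.factorial : ℝ) * Real.pi ^ ((N : ℝ) / 2) * 2 ^ (-(N : ℝ) ^ 2) := by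
  have hpos : 0 < ∏ j ∈ Finset.Icc 1 (2 * N), Real.Gamma (1 + j) :=
    Finset.prod_pos fun j _ => Real.Gamma_pos_of_pos (by positivity)
  rw [key, mul_div_assoc, div_self (ne_of_gt hpos), mul_one]
end

section
/- Let A and B be m×m complex matrices. Then |det(A+B) - det(A)| ≤ m‖B‖ · max(‖A‖, ‖A+B‖)^{m-1}, where ‖·‖ denotes the operator norm. -/
open Matrix
open scoped ComplexOrder

/-- The operator (spectral) norm of a square complex matrix, via its action on
Euclidean space. -/
noncomputable def matOpNorm {m : ℕ} (A : Matrix (Fin m) (Fin m) ℂ) : ℝ :=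
  ‖Matrix.toEuclideanCLM (𝕜 := ℂ) A‖


lemma abs_det_le_one {m : ℕ} (hm : 0 < m) (N : Matrix (Fin m) (Fin m) ℂ)
    (h : ∀ j, ∑ i, ‖N i j‖ ^ 2 ≤ 1) : ‖N.det‖ ≤ 1 := by
  set G := Nᴴ * N with hGdef
  have hPSD : G.PosSemidef := posSemidef_conjTranspose_mul_self N
  have hH := hPSD.1
  set lam := hH.eigenvalues with hlam
  have hnn : ∀ i, 0 ≤ lam i := hPSD.eigenvalues_nonneg
  -- det G = |det N|^2
  have hdetG : G.det = ((‖N.det‖ ^ 2 : ℝ) : ℂ) := by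
    rw [hGdef, det_mul, det_conjTranspose]
    rw [RCLike.star_def, RCLike.conj_mul]
    norm_cast
  have hdetR : ‖N.det‖ ^ 2 = ∏ i, lam i := by
    have h2 := hH.det_eq_prod_eigenvalues
    rw [hdetG] at h2
    have : ((‖N.det‖ ^ 2 : ℝ) : ℂ) = ((∏ i, lam i : ℝ) : ℂ) := by
      rw [h2]; push_cast; rfl
    exact_mod_cast this
  -- trace G = sum of eigenvalues
  have htrG : G.trace = ∑ i, (lam i : ℂ) := by
    have hu := (Matrix.mem_unitaryGroup_iff).mp (hH.eigenvectorUnitary).2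
    calc G.trace = ((hH.eigenvectorUnitary : Matrix (Fin m) (Fin m) ℂ) *
          star (hH.eigenvectorUnitary : Matrix (Fin m) (Fin m) ℂ) * G).trace := by
          rw [hu, one_mul]
      _ = (star (hH.eigenvectorUnitary : Matrix (Fin m) (Fin m) ℂ) * G *
            (hH.eigenvectorUnitary : Matrix (Fin m) (Fin m) ℂ)).trace := by
          rw [mul_assoc, Matrix.trace_mul_comm]
      _ = (diagonal (RCLike.ofReal ∘ lam)).trace := by rw [← Matrix.IsHermitian.conjStarAlgAut_star_eigenvectorUnitary hH, Unitary.conjStarAlgAut_apply, Unitary.coe_star, star_star]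
      _ = ∑ i, (lam i : ℂ) := by rw [trace_diagonal]; rfl
  have htrG2 : G.trace = ((∑ j, ∑ i, ‖N i j‖ ^ 2 : ℝ) : ℂ) := by
    rw [Matrix.trace]
    push_cast
    refine Finset.sum_congr rfl fun j _ => ?_
    simp only [diag_apply, hGdef, Matrix.mul_apply, conjTranspose_apply]
    push_cast
    refine Finset.sum_congr rfl fun i _ => ?_
    rw [RCLike.star_def, RCLike.conj_mul]
    norm_cast
  have hsumlam : ∑ i, lam i ≤ (m:ℝ) := by
    have hcast : ((∑ i, lam i : ℝ) : ℂ) = ((∑ j, ∑ i, ‖N i j‖ ^ 2 : ℝ) : ℂ) := by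
      push_cast
      rw [← htrG, htrG2]
      push_cast
      rfl
    have heq : (∑ i, lam i : ℝ) = ∑ j, ∑ i, ‖N i j‖ ^ 2 := by exact_mod_cast hcast
    rw [heq]
    calc ∑ j, ∑ i, ‖N i j‖ ^ 2 ≤ ∑ _j : Fin m, (1:ℝ) := Finset.sum_le_sum fun j _ => h j
      _ = m := by simp
  have hP : 0 ≤ ∏ i, lam i := Finset.prod_nonneg fun i _ => hnn i
  have hm' : (0:ℝ) < m := Nat.cast_pos.mpr hm
  have hprod1 : ∏ i, lam i ≤ 1 := by
    have amgm := Real.geom_mean_le_arith_mean_weighted Finset.univ (fun _ => (m:ℝ)⁻¹) lam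
      (fun i _ => by positivity) (by simp [Finset.sum_const, Finset.card_univ]; field_simp)
      (fun i _ => hnn i)
    have h1 : ∑ i : Fin m, (m:ℝ)⁻¹ * lam i ≤ 1 := by
      rw [← Finset.mul_sum, inv_mul_le_iff₀ hm', mul_one]
      exact hsumlam
    have h2 : (∏ i, lam i) ^ ((m:ℝ)⁻¹) ≤ 1 := by
      calc (∏ i, lam i) ^ ((m:ℝ)⁻¹) = ∏ i, lam i ^ ((m:ℝ)⁻¹) := by
            rw [← Real.finset_prod_rpow _ _ (fun i _ => hnn i)]
        _ ≤ ∑ i, (m:ℝ)⁻¹ * lam i := amgm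
        _ ≤ 1 := h1
    have h3 : ∏ i, lam i = ((∏ i, lam i) ^ ((m:ℝ)⁻¹)) ^ (m:ℝ) := by
      rw [← Real.rpow_mul hP, inv_mul_cancel₀ (ne_of_gt hm'), Real.rpow_one]
    rw [h3]
    exact Real.rpow_le_one (Real.rpow_nonneg hP _) h2 (le_of_lt hm')
  nlinarith [norm_nonneg N.det, hdetR]

noncomputable def colNorm {m : ℕ} (M : Matrix (Fin m) (Fin m) ℂ) (j : Fin m) : ℝ :=
  Real.sqrt (∑ i, ‖M i j‖ ^ 2)

lemma abs_det_le_prod {m : ℕ} (M : Matrix (Fin m) (Fin m) ℂ) (c : Fin m → ℝ)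
    (hc : ∀ j, colNorm M j ≤ c j) : ‖M.det‖ ≤ ∏ j, c j := by
  rcases Nat.eq_zero_or_pos m with hm | hm
  · subst hm
    simp [Matrix.det_isEmpty]
  by_cases hzero : ∃ j, c j ≤ 0
  · obtain ⟨j, hj⟩ := hzero
    have hc0 : c j = 0 := le_antisymm hj ((Real.sqrt_nonneg _).trans (hc j))
    have hsum0 : ∑ i, ‖M i j‖ ^ 2 ≤ 0 := by
      have h1 : colNorm M j = 0 := le_antisymm (hc0 ▸ hc j) (Real.sqrt_nonneg _)
      exact Real.sqrt_eq_zero'.mp h1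
    have hcol : ∀ i, M i j = 0 := by
      intro i
      have hterm : ‖M i j‖ ^ 2 = 0 := by
        have hle : ‖M i j‖ ^ 2 ≤ 0 := by
          refine le_trans ?_ hsum0
          exact Finset.single_le_sum (f := fun i => ‖M i j‖ ^ 2) (fun i _ => by positivity) (Finset.mem_univ i)
        nlinarith [sq_nonneg ‖M i j‖]
      have : ‖M i j‖ = 0 := by nlinarith
      exact norm_eq_zero.mp this
    rw [Matrix.det_eq_zero_of_column_eq_zero j hcol]
    rw [Finset.prod_eq_zero (Finset.mem_univ j) hc0]
    simp
  · push_neg at hzero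
    set N : Matrix (Fin m) (Fin m) ℂ := M * diagonal (fun j => ((c j : ℂ))⁻¹) with hNdef
    have hN : ∀ i j, N i j = M i j * (c j : ℂ)⁻¹ := by
      intro i j
      rw [hNdef, Matrix.mul_diagonal]
    have hcne : ∀ j, c j ≠ 0 := fun j => ne_of_gt (hzero j)
    have hcolN : ∀ j, ∑ i, ‖N i j‖ ^ 2 ≤ 1 := by
      intro j
      have heq : ∑ i, ‖N i j‖ ^ 2 = (∑ i, ‖M i j‖ ^ 2) / (c j) ^ 2 := by
        rw [Finset.sum_div]
        refine Finset.sum_congr rfl fun i _ => ?_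
        rw [hN, norm_mul, mul_pow, norm_inv, Complex.norm_real, Real.norm_eq_abs,
          abs_of_pos (hzero j)]
        rw [div_eq_mul_inv, inv_pow]
      rw [heq, div_le_one (pow_pos (hzero j) 2)]
      have h1 : Real.sqrt (∑ i, ‖M i j‖ ^ 2) ≤ c j := hc j
      have h2 : ∑ i, ‖M i j‖ ^ 2 = Real.sqrt (∑ i, ‖M i j‖ ^ 2) ^ 2 :=
        (Real.sq_sqrt (by positivity)).symm
      rw [h2]
      exact pow_le_pow_left₀ (Real.sqrt_nonneg _) h1 2
    have hdet : M.det = N.det * ∏ j, (c j : ℂ) := by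
      rw [hNdef, det_mul, det_diagonal, mul_assoc, ← Finset.prod_mul_distrib]
      have : ∀ j : Fin m, ((c j : ℂ))⁻¹ * (c j : ℂ) = 1 := fun j =>
        inv_mul_cancel₀ (by exact_mod_cast hcne j)
      simp [this]
    rw [hdet, norm_mul]
    have h1 := abs_det_le_one hm N hcolN
    have h2 : ‖∏ j, (c j : ℂ)‖ = ∏ j, c j := by
      rw [norm_prod]
      exact Finset.prod_congr rfl fun j _ => by
        rw [Complex.norm_real, Real.norm_eq_abs, abs_of_pos (hzero j)]
    rw [h2]
    calc ‖N.det‖ * ∏ j, c j ≤ 1 * ∏ j, c j :=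
          mul_le_mul_of_nonneg_right h1 (Finset.prod_nonneg fun j _ => le_of_lt (hzero j))
      _ = ∏ j, c j := one_mul _

lemma colNorm_le_opNorm {m : ℕ} (M : Matrix (Fin m) (Fin m) ℂ) (j : Fin m) :
    colNorm M j ≤ matOpNorm M := by
  have h := (Matrix.toEuclideanCLM (𝕜 := ℂ) M).le_opNorm (EuclideanSpace.single j (1:ℂ))
  rw [EuclideanSpace.norm_single, norm_one, mul_one] at h
  have e : (EuclideanSpace.single j (1:ℂ)) = (WithLp.equiv 2 _).symm (Pi.single j 1) := rfl
  rw [e, WithLp.equiv_symm_apply, Matrix.toEuclideanCLM_toLp, EuclideanSpace.norm_eq] at h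
  have e2 : ∀ i : Fin m, ‖(WithLp.equiv 2 (Fin m → ℂ)).symm (M *ᵥ Pi.single j 1) i‖ = ‖M i j‖ := by
    intro i; simp [mulVec_single]
  calc colNorm M j
      = Real.sqrt (∑ i, ‖(WithLp.equiv 2 (Fin m → ℂ)).symm (M *ᵥ Pi.single j 1) i‖ ^ 2) := by
        unfold colNorm; congr 1; exact Finset.sum_congr rfl fun i _ => by rw [e2]
    _ ≤ matOpNorm M := h

lemma colNorm_le_of_col_eq {m : ℕ} (M X : Matrix (Fin m) (Fin m) ℂ) (j j' : Fin m)
    (h : ∀ i, M i j = X i j') : colNorm M j ≤ matOpNorm X := by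
  have heq : colNorm M j = colNorm X j' := by
    unfold colNorm; congr 1; exact Finset.sum_congr rfl fun i _ => by rw [h]
  rw [heq]; exact colNorm_le_opNorm X j'

set_option maxHeartbeats 1000000 in
theorem stmt14 (m : ℕ) (A B : Matrix (Fin m) (Fin m) ℂ) :
    ‖(A + B).det - A.det‖ ≤
      m * matOpNorm B * max (matOpNorm A) (matOpNorm (A + B)) ^ (m - 1) := by
  set Mx := max (matOpNorm A) (matOpNorm (A + B)) with hMx
  have hMx0 : 0 ≤ Mx := le_trans (norm_nonneg _) (le_max_left _ _)
  set C : ℕ → Matrix (Fin m) (Fin m) ℂ :=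
    fun k => Matrix.of fun i j => if (j : ℕ) < k then (A + B) i j else A i j with hC
  have hC0 : C 0 = A := by ext i j; simp [hC]
  have hCm : C m = A + B := by ext i j; simp [hC, j.isLt]
  have htel : (A + B).det - A.det = ∑ k ∈ Finset.range m, ((C (k+1)).det - (C k).det) := by
    rw [Finset.sum_range_sub (fun k => (C k).det), hC0, hCm]
  rw [htel]
  have hterm : ∀ k ∈ Finset.range m,
      ‖(C (k+1)).det - (C k).det‖ ≤ matOpNorm B * Mx ^ (m - 1) := by
    intro k hk
    have hkm : k < m := Finset.mem_range.mp hk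
    set k' : Fin m := ⟨k, hkm⟩ with hk'
    have h1 : C (k+1) = (C k).updateCol k' ((fun i => A i k') + (fun i => B i k')) := by
      ext i j
      rw [updateCol_apply]
      by_cases hj : j = k'
      · rw [if_pos hj, hj]
        simp [hC, hk', Nat.lt_succ_self]
      · rw [if_neg hj]
        have hne : (j : ℕ) ≠ k := fun hcontra => hj (Fin.ext hcontra)
        have hiff : (j : ℕ) < k + 1 ↔ (j : ℕ) < k := by omega
        simp [hC, hiff]
    have h2 : (C k).updateCol k' (fun i => A i k') = C k := by
      ext i j
      rw [updateCol_apply]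
      by_cases hj : j = k'
      · rw [if_pos hj, hj]
        simp [hC, hk']
      · rw [if_neg hj]
    have hdiff : (C (k+1)).det - (C k).det = ((C k).updateCol k' (fun i => B i k')).det := by
      rw [h1, det_updateCol_add]
      nth_rewrite 3 [← h2]
      ring
    rw [hdiff]
    have hcolbound : ∀ j, colNorm ((C k).updateCol k' (fun i => B i k')) j ≤
        (if j = k' then matOpNorm B else Mx) := by
      intro j
      by_cases hj : j = k'
      · subst hj
        rw [if_pos rfl]
        exact colNorm_le_of_col_eq _ B k' k' (fun i => by rw [updateCol_apply, if_pos rfl])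
      · rw [if_neg hj]
        by_cases hlt : (j : ℕ) < k
        · refine le_trans (colNorm_le_of_col_eq _ (A + B) j j (fun i => ?_)) (le_max_right _ _)
          rw [updateCol_apply, if_neg hj]
          simp [hC, hlt]
        · refine le_trans (colNorm_le_of_col_eq _ A j j (fun i => ?_)) (le_max_left _ _)
          rw [updateCol_apply, if_neg hj]
          simp [hC, hlt]
    have hbound := abs_det_le_prod ((C k).updateCol k' (fun i => B i k'))
      (fun j => if j = k' then matOpNorm B else Mx) hcolbound
    have hprod : ∏ j, (if j = k' then matOpNorm B else Mx) = matOpNorm B * Mx ^ (m - 1) := by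
      rw [← Finset.mul_prod_erase Finset.univ _ (Finset.mem_univ k'), if_pos rfl]
      congr 1
      rw [Finset.prod_congr rfl (fun j hj => if_neg (Finset.ne_of_mem_erase hj)),
        Finset.prod_const, Finset.card_erase_of_mem (Finset.mem_univ k'), Finset.card_univ,
        Fintype.card_fin]
    rw [hprod] at hbound
    exact hbound
  calc ‖∑ k ∈ Finset.range m, ((C (k+1)).det - (C k).det)‖
      ≤ ∑ k ∈ Finset.range m, ‖(C (k+1)).det - (C k).det‖ :=
        norm_sum_le _ _
    _ ≤ ∑ _k ∈ Finset.range m, (matOpNorm B * Mx ^ (m - 1)) := Finset.sum_le_sum hterm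
    _ = m * matOpNorm B * Mx ^ (m - 1) := by
        rw [Finset.sum_const, Finset.card_range, nsmul_eq_mul]
        ring
end

section
/- Let A be an m×m complex matrix. Then |det(I+A) - 1| ≤ (m‖A‖_F + 1)^m - 1, where ‖A‖_F = √(Tr(A*A)) is the Frobenius norm. -/
open Matrix Finset

/-- The Frobenius norm `√(Tr(AᴴA))` of a square complex matrix. -/
noncomputable def matFrobNorm {m : ℕ} (A : Matrix (Fin m) (Fin m) ℂ) : ℝ :=
  Real.sqrt ((Matrix.trace (Aᴴ * A)).re)

lemma entry_le_frob {m : ℕ} (A : Matrix (Fin m) (Fin m) ℂ) (i j : Fin m) :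
    ‖A i j‖ ≤ matFrobNorm A := by
  rw [matFrobNorm]
  have htr : (Matrix.trace (Aᴴ * A)).re = ∑ k, ∑ l, Complex.normSq (A l k) := by
    simp only [Matrix.trace, Matrix.diag, Matrix.mul_apply, Matrix.conjTranspose_apply,
      Complex.re_sum]
    refine Finset.sum_congr rfl fun k _ => Finset.sum_congr rfl fun l _ => ?_
    simp [Complex.mul_re, Complex.normSq_apply, Complex.star_def]
  rw [htr, Complex.norm_def]
  apply Real.sqrt_le_sqrt
  calc Complex.normSq (A i j) ≤ ∑ l, Complex.normSq (A l j) :=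
        Finset.single_le_sum (f := fun l => Complex.normSq (A l j))
          (fun l _ => Complex.normSq_nonneg _) (Finset.mem_univ i)
    _ ≤ ∑ k, ∑ l, Complex.normSq (A l k) :=
        Finset.single_le_sum (f := fun k => ∑ l, Complex.normSq (A l k))
          (fun k _ => Finset.sum_nonneg fun l _ => Complex.normSq_nonneg _)
          (Finset.mem_univ j)

lemma prod_one_add_sub_one_abs {ι : Type*} (s : Finset ι) (f : ι → ℂ) :
    ‖∏ i ∈ s, (1 + f i) - 1‖ ≤ ∏ i ∈ s, (1 + ‖f i‖) - 1 := by
  induction s using Finset.cons_induction_on with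
  | empty => simp
  | cons _ _ h ih =>
    rename_i a s
    rw [Finset.prod_cons, Finset.prod_cons]
    have hQ1 : (1 : ℝ) ≤ ∏ i ∈ s, (1 + ‖f i‖) := by
      calc (1 : ℝ) = ∏ _i ∈ s, (1 : ℝ) := by simp
        _ ≤ ∏ i ∈ s, (1 + ‖f i‖) :=
          Finset.prod_le_prod (fun i _ => zero_le_one) (fun i _ => le_add_of_nonneg_right (norm_nonneg _))
    have key : (1 + f a) * ∏ i ∈ s, (1 + f i) - 1
        = (1 + f a) * (∏ i ∈ s, (1 + f i) - 1) + f a := by ring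
    rw [key]
    calc ‖(1 + f a) * (∏ i ∈ s, (1 + f i) - 1) + f a‖
        ≤ ‖1 + f a‖ * ‖∏ i ∈ s, (1 + f i) - 1‖
            + ‖f a‖ := by
          rw [← norm_mul]; exact norm_add_le _ _
      _ ≤ (1 + ‖f a‖) * (∏ i ∈ s, (1 + ‖f i‖) - 1)
            + ‖f a‖ := by
          gcongr
          · calc ‖1 + f a‖ ≤ ‖(1 : ℂ)‖ + ‖f a‖ :=
                norm_add_le _ _
              _ = 1 + ‖f a‖ := by simp
      _ = (1 + ‖f a‖) * ∏ i ∈ s, (1 + ‖f i‖) - 1 := by ring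

theorem stmt15 (m : ℕ) (A : Matrix (Fin m) (Fin m) ℂ) :
    ‖(1 + A).det - 1‖ ≤ (m * matFrobNorm A + 1) ^ m - 1 := by
  set r := matFrobNorm A with hr
  have hr0 : 0 ≤ r := Real.sqrt_nonneg _
  set C : Fin m → Fin m → ℝ := fun j i => (if j = i then 1 else 0) + ‖A j i‖
    with hC
  have hC0 : ∀ j i, 0 ≤ C j i := fun j i => by
    simp only [hC]; positivity
  have hentry : ∀ j i, ‖(1 + A) j i‖ ≤ C j i := by
    intro j i
    have : (1 + A) j i = (if j = i then 1 else 0) + A j i := by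
      simp [Matrix.one_apply]
    rw [this]
    calc ‖(if j = i then 1 else 0) + A j i‖
        ≤ ‖if j = i then 1 else 0‖ + ‖A j i‖ :=
          norm_add_le _ _
      _ ≤ C j i := by
          simp only [hC]
          split <;> simp
  -- step 1: bound by "permanent" of C minus 1
  have step1 : ‖(1 + A).det - 1‖
      ≤ (∑ σ : Equiv.Perm (Fin m), ∏ i, C (σ i) i) - 1 := by
    rw [Matrix.det_apply]
    have hsplit : (∑ σ : Equiv.Perm (Fin m),
          Equiv.Perm.sign σ • ∏ i, (1 + A) (σ i) i)
        = (∏ i, (1 + A) i i) +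
          ∑ σ ∈ Finset.univ.erase (1 : Equiv.Perm (Fin m)), Equiv.Perm.sign σ • ∏ i, (1 + A) (σ i) i := by
      rw [← Finset.add_sum_erase _ _ (Finset.mem_univ (1 : Equiv.Perm (Fin m)))]
      simp
    rw [hsplit]
    have hsplit' : (∑ σ : Equiv.Perm (Fin m), ∏ i, C (σ i) i)
        = (∏ i, C i i) + ∑ σ ∈ Finset.univ.erase (1 : Equiv.Perm (Fin m)), ∏ i, C (σ i) i := by
      rw [← Finset.add_sum_erase _ _ (Finset.mem_univ (1 : Equiv.Perm (Fin m)))]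
      simp
    rw [hsplit']
    have habs1 : ‖(∏ i, (1 + A) i i) - 1‖ ≤ (∏ i, C i i) - 1 := by
      have h1 : ∀ i : Fin m, (1 + A) i i = 1 + A i i := by
        intro i; simp [Matrix.one_apply]
      have h2 : ∀ i : Fin m, C i i = 1 + ‖A i i‖ := by
        intro i; simp [hC]
      simp only [h1, h2]
      exact prod_one_add_sub_one_abs _ _
    calc ‖(∏ i, (1 + A) i i) +
            (∑ σ ∈ Finset.univ.erase (1 : Equiv.Perm (Fin m)), Equiv.Perm.sign σ • ∏ i, (1 + A) (σ i) i) - 1‖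
        ≤ ‖(∏ i, (1 + A) i i) - 1‖ +
            ‖∑ σ ∈ Finset.univ.erase (1 : Equiv.Perm (Fin m)),
              Equiv.Perm.sign σ • ∏ i, (1 + A) (σ i) i‖ := by
          have : (∏ i, (1 + A) i i) +
              (∑ σ ∈ Finset.univ.erase (1 : Equiv.Perm (Fin m)), Equiv.Perm.sign σ • ∏ i, (1 + A) (σ i) i) - 1
              = ((∏ i, (1 + A) i i) - 1) +
                ∑ σ ∈ Finset.univ.erase (1 : Equiv.Perm (Fin m)), Equiv.Perm.sign σ • ∏ i, (1 + A) (σ i) i := by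
            ring
          rw [this]; exact norm_add_le _ _
      _ ≤ ((∏ i, C i i) - 1) + ∑ σ ∈ Finset.univ.erase (1 : Equiv.Perm (Fin m)), ∏ i, C (σ i) i := by
          gcongr
          · calc ‖∑ σ ∈ Finset.univ.erase (1 : Equiv.Perm (Fin m)),
                  Equiv.Perm.sign σ • ∏ i, (1 + A) (σ i) i‖
                ≤ ∑ σ ∈ Finset.univ.erase (1 : Equiv.Perm (Fin m)),
                    ‖Equiv.Perm.sign σ • ∏ i, (1 + A) (σ i) i‖ :=
                  norm_sum_le _ _
              _ ≤ ∑ σ ∈ Finset.univ.erase (1 : Equiv.Perm (Fin m)), ∏ i, C (σ i) i := by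
                  apply Finset.sum_le_sum
                  intro σ _
                  have : ‖Equiv.Perm.sign σ • ∏ i, (1 + A) (σ i) i‖
                      = ‖∏ i, (1 + A) (σ i) i‖ := by
                    rcases Int.units_eq_one_or (Equiv.Perm.sign σ) with h | h <;>
                      simp [h, Units.smul_def]
                  rw [this, norm_prod]
                  exact Finset.prod_le_prod (fun i _ => by positivity)
                    (fun i _ => hentry _ _)
      _ = (∏ i, C i i) + (∑ σ ∈ Finset.univ.erase (1 : Equiv.Perm (Fin m)), ∏ i, C (σ i) i) - 1 := by ring
  -- step 2: permanent ≤ product of column sums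
  have step2 : (∑ σ : Equiv.Perm (Fin m), ∏ i, C (σ i) i) ≤ ∏ i, ∑ j, C j i := by
    rw [Finset.prod_univ_sum]
    have himg : (∑ σ : Equiv.Perm (Fin m), ∏ i, C (σ i) i)
        = ∑ f ∈ Finset.univ.image (fun σ : Equiv.Perm (Fin m) => (σ : Fin m → Fin m)),
            ∏ i, C (f i) i := by
      rw [Finset.sum_image]
      intro x _ y _ h
      exact Equiv.coe_fn_injective h
    rw [himg]
    apply Finset.sum_le_sum_of_subset_of_nonneg
    · intro f _
      rw [Fintype.piFinset_univ]
      exact Finset.mem_univ f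
    · intro f _ _
      exact Finset.prod_nonneg fun i _ => hC0 _ _
  -- step 3: column sums ≤ m r + 1
  have step3 : (∏ i, ∑ j, C j i) ≤ (m * r + 1) ^ m := by
    calc (∏ i, ∑ j, C j i) ≤ ∏ _i : Fin m, (m * r + 1) := by
          apply Finset.prod_le_prod
          · intro i _; exact Finset.sum_nonneg fun j _ => hC0 _ _
          · intro i _
            have : (∑ j, C j i) = 1 + ∑ j, ‖A j i‖ := by
              simp only [hC]
              rw [Finset.sum_add_distrib]
              congr 1
              simp
            rw [this]
            have : (∑ j : Fin m, ‖A j i‖) ≤ ∑ _j : Fin m, r :=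
              Finset.sum_le_sum fun j _ => entry_le_frob A j i
            simp only [Finset.sum_const, Finset.card_univ, Fintype.card_fin,
              nsmul_eq_mul] at this
            linarith
      _ = (m * r + 1) ^ m := by
          rw [Finset.prod_const, Finset.card_univ, Fintype.card_fin]
  linarith
end
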